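/- Let M → M' be a matroid perspective on a finite linearly ordered set E. Let B be independent in M and spanning in M', and let A satisfy B \ Int_{M'}(B) ⊆ A ⊆ B ∪ Ext_M(B). Then Ext_M(A) = Ext_M(B) \ A and Q_M(A) = Ext_M(B) ∩ A. -/

import Mathlib

open Set

/-- `e` is the smallest element of `C`. -/
def SmallestIn {α : Type*} [LinearOrder α] (e : α) (C : Set α) : Prop :=
  e ∈ C ∧ ∀ f ∈ C, e ≤ f

/-- `C` is a circuit of `M`: a minimal dependent set. -/
def IsCircuit {α : Type*} (M : Matroid α) (C : Set α) : Prop :=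
  ¬ M.Indep C ∧ ∀ x ∈ C, M.Indep (C \ {x})

/-- A cocircuit is a circuit of the dual matroid. -/
def IsCocircuit {α : Type*} (M : Matroid α) (C : Set α) : Prop :=
  IsCircuit M✶ C

/-- `P_M(A)`: elements outside `A` that are smallest in some cocircuit avoiding `A`. -/
def Pset {α : Type*} [LinearOrder α] (M : Matroid α) (A : Set α) : Set α :=
  {e | e ∉ A ∧ ∃ C, IsCocircuit M C ∧ C ⊆ Aᶜ ∧ SmallestIn e C}

/-- `Q_M(A)`: elements of `A` that are smallest in some circuit contained in `A`. -/
def Qset {α : Type*} [LinearOrder α] (M : Matroid α) (A : Set α) : Set α :=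
  {e | e ∈ A ∧ ∃ C, IsCircuit M C ∧ C ⊆ A ∧ SmallestIn e C}

/-- Externally active elements of `A`. -/
def ExtSet {α : Type*} [LinearOrder α] (M : Matroid α) (A : Set α) : Set α :=
  {e | e ∉ A ∧ ∃ C, IsCircuit M C ∧ C ⊆ A ∪ {e} ∧ SmallestIn e C}

/-- Internally active elements of `A`. -/
def IntSet {α : Type*} [LinearOrder α] (M : Matroid α) (A : Set α) : Set α :=
  {e | e ∈ A ∧ ∃ C, IsCocircuit M C ∧ C ⊆ Aᶜ ∪ {e} ∧ SmallestIn e C}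

/-- The rank of a set: the largest cardinality of an independent subset. -/
noncomputable def rk {α : Type*} (M : Matroid α) (A : Set α) : ℕ :=
  sSup (Set.ncard '' {I | I ⊆ A ∧ M.Indep I})

/-- Matroid perspective (strong-map / quotient condition, form (MP3)). -/
def Perspective {α : Type*} (M M' : Matroid α) : Prop :=
  ∀ C D : Set α, IsCircuit M C → IsCocircuit M' D → (C ∩ D).ncard ≠ 1

/-- Rank codrop of a subset in a matroid perspective. -/
noncomputable def rcd {α : Type*} (M M' : Matroid α) (A : Set α) : ℕ :=
  ((rk M Set.univ : ℤ) - rk M' Set.univ - ((rk M A : ℤ) - rk M' A)).toNat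

/-- Every dependent set (over a finite type) contains a circuit. -/
lemma exists_circuit_subset {α : Type*} [Fintype α] {M : Matroid α} :
    ∀ n : ℕ, ∀ X : Set α, X.ncard ≤ n → ¬ M.Indep X → ∃ C ⊆ X, IsCircuit M C := by
  intro n
  induction n with
  | zero =>
    intro X hX hdep
    rw [Nat.le_zero, Set.ncard_eq_zero X.toFinite] at hX
    subst hX
    exact absurd M.empty_indep hdep
  | succ n ih =>
    intro X hX hdep
    by_cases hall : ∀ x ∈ X, M.Indep (X \ {x})
    · exact ⟨X, subset_rfl, hdep, hall⟩
    · push_neg at hall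
      obtain ⟨x, hx, hxd⟩ := hall
      have hlt : (X \ {x}).ncard < X.ncard := Set.ncard_diff_singleton_lt_of_mem hx X.toFinite
      obtain ⟨C, hCs, hC⟩ := ih (X \ {x}) (by omega) hxd
      exact ⟨C, hCs.trans Set.diff_subset, hC⟩

lemma circuit_mem_closure {α : Type*} {M : Matroid α} (hE : M.E = Set.univ)
    {C : Set α} (hC : IsCircuit M C) {e : α} (he : e ∈ C) : e ∈ M.closure (C \ {e}) := by
  by_contra hcl
  have hI : M.Indep (C \ {e}) := hC.2 e he
  have : M.Indep (insert e (C \ {e})) := by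
    rw [hI.insert_indep_iff_of_notMem (by simp)]
    exact ⟨by simp [hE], hcl⟩
  rw [Set.insert_diff_singleton, Set.insert_eq_of_mem he] at this
  exact hC.1 this

lemma exists_circuit_insert {α : Type*} [Fintype α] {M : Matroid α}
    {I : Set α} {e : α} (hI : M.Indep I) (heI : e ∉ I) (hecl : e ∈ M.closure I) :
    ∃ C, IsCircuit M C ∧ C ⊆ insert e I ∧ e ∈ C := by
  have hdep : ¬ M.Indep (insert e I) := by
    intro hind
    rw [hI.insert_indep_iff_of_notMem heI] at hind
    exact hind.2 hecl
  obtain ⟨C, hCs, hC⟩ := exists_circuit_subset (insert e I).ncard (insert e I) le_rfl hdep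
  refine ⟨C, hC, hCs, ?_⟩
  by_contra heC
  exact hC.1 (hI.subset fun x hx => ((hCs hx).resolve_left (fun h => heC (h ▸ hx))))

lemma strong_elimination {α : Type*} [Fintype α] {M : Matroid α} (hE : M.E = Set.univ)
    {C₁ C₂ : Set α} (h₁ : IsCircuit M C₁) (h₂ : IsCircuit M C₂) {e f : α}
    (hf : f ∈ C₁ ∩ C₂) (he : e ∈ C₁ \ C₂) :
    ∃ C, IsCircuit M C ∧ C ⊆ (C₁ ∪ C₂) \ {f} ∧ e ∈ C := by
  set Y : Set α := (C₁ ∪ C₂) \ {e, f} with hY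
  have hYE : Y ⊆ M.E := by rw [hE]; exact subset_univ _
  have hfY : f ∈ M.closure Y := by
    have h1 : f ∈ M.closure (C₂ \ {f}) := circuit_mem_closure hE h₂ hf.2
    refine M.closure_subset_closure ?_ h1
    intro x hx
    exact ⟨Or.inr hx.1, by rintro (rfl | rfl); exact he.2 hx.1; exact hx.2 rfl⟩
  have heY : e ∈ M.closure Y := by
    have h1 : e ∈ M.closure (C₁ \ {e}) := circuit_mem_closure hE h₁ he.1
    have h2 : C₁ \ {e} ⊆ M.closure Y := by
      intro x hx
      by_cases hxf : x = f
      · exact hxf ▸ hfY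
      · exact M.subset_closure Y hYE
          ⟨Or.inl hx.1, by rintro (rfl | rfl); exact hx.2 rfl; exact hxf rfl⟩
    have h3 : M.closure (C₁ \ {e}) ⊆ M.closure Y := by
      have := M.closure_subset_closure h2
      rwa [M.closure_closure] at this
    exact h3 h1
  obtain ⟨I, hIb⟩ := M.exists_isBasis Y hYE
  have heI : e ∈ M.closure I := by rw [hIb.closure_eq_closure]; exact heY
  have heI' : e ∉ I := fun h => (hIb.subset h).2 (Or.inl rfl)
  obtain ⟨C, hC, hCs, heC⟩ := exists_circuit_insert hIb.indep heI' heI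
  refine ⟨C, hC, ?_, heC⟩
  intro x hx
  rcases hCs hx with rfl | hxI
  · exact ⟨Or.inl he.1, fun hxf => he.2 (by rw [Set.mem_singleton_iff] at hxf; exact hxf ▸ hf.2)⟩
  · exact ⟨(hIb.subset hxI).1, fun hxf => (hIb.subset hxI).2 (Or.inr hxf)⟩

/-- The elimination induction: a circuit whose elements outside `B` (other than its
minimum `e`) are externally active w.r.t. `B` can be turned into a circuit in `B ∪ {e}`
with minimum `e`. -/
lemma elim_induction {α : Type*} [Fintype α] [LinearOrder α] {M : Matroid α}
    (hE : M.E = Set.univ) (B : Set α) (e : α) :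
    ∀ n : ℕ, ∀ C : Set α, IsCircuit M C → e ∈ C → (∀ g ∈ C, e ≤ g) →
      (∀ f ∈ C, f ∉ B → f ≠ e → f ∈ ExtSet M B) → (C \ insert e B).ncard ≤ n →
      ∃ C', IsCircuit M C' ∧ C' ⊆ insert e B ∧ e ∈ C' ∧ ∀ g ∈ C', e ≤ g := by
  intro n
  induction n with
  | zero =>
    intro C hC heC hmin hext hcard
    have hemp : C \ insert e B = ∅ := by
      rw [← Set.ncard_eq_zero (C \ insert e B).toFinite]; omega
    have : C ⊆ insert e B := fun x hx => by
      by_contra hx'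
      exact (Set.eq_empty_iff_forall_notMem.mp hemp x) ⟨hx, hx'⟩
    exact ⟨C, hC, this, heC, hmin⟩
  | succ n ih =>
    intro C hC heC hmin hext hcard
    by_cases hemp : C \ insert e B = ∅
    · have : C ⊆ insert e B := fun x hx => by
        by_contra hx'
        exact (Set.eq_empty_iff_forall_notMem.mp hemp x) ⟨hx, hx'⟩
      exact ⟨C, hC, this, heC, hmin⟩
    · obtain ⟨f, hf⟩ := Set.nonempty_iff_ne_empty.mpr hemp
      have hfC : f ∈ C := hf.1
      have hfB : f ∉ B := fun h => hf.2 (Or.inr h)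
      have hfe : f ≠ e := fun h => hf.2 (Or.inl h)
      obtain ⟨-, Cf, hCf, hCfs, hCfmin⟩ := hext f hfC hfB hfe
      have hef : e < f := lt_of_le_of_ne (hmin f hfC) (Ne.symm hfe)
      have heCf : e ∉ Cf := fun h => absurd (hCfmin.2 e h) (not_le.mpr hef)
      have hfCf : f ∈ Cf := hCfmin.1
      obtain ⟨C', hC', hC's, heC'⟩ :=
        strong_elimination hE hC hCf ⟨hfC, hfCf⟩ ⟨heC, heCf⟩
      have hkey : ∀ x ∈ C', x ∉ insert e B → x ∈ C ∧ x ≠ f := by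
        intro x hx hxB
        have hx' := hC's hx
        have hxf : x ≠ f := fun h => hx'.2 (h ▸ rfl)
        rcases hx'.1 with hxC | hxCf
        · exact ⟨hxC, hxf⟩
        · rcases hCfs hxCf with hxB' | hxf'
          · exact absurd (Or.inr hxB') hxB
          · exact absurd hxf' hxf
      have hmin' : ∀ g ∈ C', e ≤ g := by
        intro g hg
        rcases (hC's hg).1 with hgC | hgCf
        · exact hmin g hgC
        · exact le_of_lt (lt_of_lt_of_le hef (hCfmin.2 g hgCf))
      have hext' : ∀ g ∈ C', g ∉ B → g ≠ e → g ∈ ExtSet M B := by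
        intro g hg hgB hge
        have := hkey g hg (by rintro (rfl | h); exact hge rfl; exact hgB h)
        exact hext g this.1 hgB hge
      have hsub : C' \ insert e B ⊆ (C \ insert e B) \ {f} := by
        intro x hx
        exact ⟨⟨(hkey x hx.1 hx.2).1, hx.2⟩, (hkey x hx.1 hx.2).2⟩
      have hcard' : (C' \ insert e B).ncard ≤ n := by
        have h1 : (C' \ insert e B).ncard ≤ ((C \ insert e B) \ {f}).ncard :=
          Set.ncard_le_ncard hsub ((C \ insert e B).toFinite.subset Set.diff_subset)
        have h2 : ((C \ insert e B) \ {f}).ncard < (C \ insert e B).ncard :=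
          Set.ncard_diff_singleton_lt_of_mem hf (C \ insert e B).toFinite
        omega
      exact ih C' hC' heC' hmin' hext' hcard'

theorem interval_ExtSet_Qset {α : Type*} [Fintype α] [LinearOrder α]
    (M M' : Matroid α) (hE : M.E = Set.univ) (hE' : M'.E = Set.univ)
    (h : Perspective M M') (B A : Set α)
    (hBi : M.Indep B) (hBs : M'.Spanning B)
    (hA1 : B \ IntSet M' B ⊆ A) (hA2 : A ⊆ B ∪ ExtSet M B) :
    ExtSet M A = ExtSet M B \ A ∧ Qset M A = ExtSet M B ∩ A := by
  have hXsub : A \ B ⊆ ExtSet M B := fun a ha => (hA2 ha.1).resolve_left ha.2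
  have hBA : B \ A ⊆ IntSet M' B := fun b hb => by
    by_contra hI; exact hb.2 (hA1 ⟨hb.1, hI⟩)
  -- Claim 1: any circuit witnessing external activity of `e` w.r.t. `B` avoids `B \ A`.
  have claim1 : ∀ e ∈ ExtSet M B, ∀ C, IsCircuit M C → C ⊆ B ∪ {e} → SmallestIn e C →
      C ⊆ (B ∩ A) ∪ {e} := by
    intro e heX C hC hCs hCm g hg
    rcases hCs hg with hgB | hge
    · by_cases hgA : g ∈ A
      · exact Or.inl ⟨hgB, hgA⟩
      · exfalso
        obtain ⟨-, D, hD, hDs, hDm⟩ := hBA ⟨hgB, hgA⟩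
        have hgCD : g ∈ C ∩ D := ⟨hg, hDm.1⟩
        have heCD : e ∈ C ∩ D := by
          by_contra heCD
          have hCD : C ∩ D = {g} := by
            rw [Set.eq_singleton_iff_unique_mem]
            refine ⟨hgCD, fun x hx => ?_⟩
            rcases hCs hx.1 with hxB | hxe
            · rcases hDs hx.2 with hxBc | hxg
              · exact absurd hxB hxBc
              · exact hxg
            · exact absurd (hxe ▸ hx) heCD
          exact h C D hC hD (by rw [hCD, Set.ncard_singleton])
        have : e = g := le_antisymm (hCm.2 g hg) (hDm.2 e heCD.2)
        exact heX.1 (this ▸ hgB)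
    · exact Or.inr hge
  -- Claim 3: a circuit inside `A ∪ {e}` with minimum `e` shows `e ∉ B` and `e ∈ ExtSet M B`.
  have claim3 : ∀ e C, IsCircuit M C → C ⊆ A ∪ {e} → SmallestIn e C →
      e ∉ B ∧ e ∈ ExtSet M B := by
    intro e C hC hCs hCm
    have hext : ∀ f ∈ C, f ∉ B → f ≠ e → f ∈ ExtSet M B := by
      intro f hf hfB hfe
      have hfA : f ∈ A := by
        rcases hCs hf with h' | h'
        · exact h'
        · exact absurd h' (by simpa using hfe)
      exact hXsub ⟨hfA, hfB⟩
    obtain ⟨C', hC', hC's, heC', hmin'⟩ :=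
      elim_induction hE B e (C \ insert e B).ncard C hC hCm.1 hCm.2 hext le_rfl
    have heB : e ∉ B := by
      intro heB
      have hsub : C' ⊆ B := fun x hx => by
        rcases hC's hx with rfl | h'
        · exact heB
        · exact h'
      exact hC'.1 (hBi.subset hsub)
    refine ⟨heB, heB, C', hC', ?_, heC', hmin'⟩
    intro x hx
    rcases hC's hx with rfl | h'
    · exact Or.inr rfl
    · exact Or.inl h'
  constructor
  · ext e
    constructor
    · rintro ⟨heA, C, hC, hCs, hCm⟩
      exact ⟨(claim3 e C hC hCs hCm).2, heA⟩
    · rintro ⟨heX, heA⟩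
      obtain ⟨heB, C, hC, hCs, hCm⟩ := id heX
      refine ⟨heA, C, hC, ?_, hCm⟩
      intro x hx
      rcases claim1 e heX C hC hCs hCm hx with h' | h'
      · exact Or.inl h'.2
      · exact Or.inr h'
  · ext e
    constructor
    · rintro ⟨heA, C, hC, hCs, hCm⟩
      exact ⟨(claim3 e C hC (hCs.trans Set.subset_union_left) hCm).2, heA⟩
    · rintro ⟨heX, heA⟩
      obtain ⟨heB, C, hC, hCs, hCm⟩ := id heX
      refine ⟨heA, C, hC, ?_, hCm⟩
      intro x hx
      rcases claim1 e heX C hC hCs hCm hx with h' | h'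
      · exact h'.2
      · exact (Set.mem_singleton_iff.mp h') ▸ heA
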